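/- Strong duality for the Kullback–Leibler uncertainty set: Let S be a finite nonempty set, p a pmf on S, v : S → ℝ any function, and σ ≥ 0. Then inf{ E_q[v] : q a pmf on S with q(s) = 0 whenever p(s) = 0 and KL(q‖p) ≤ σ } = sup_{α > 0} { −α · log( E_p[ exp(−v/α) ] ) − α·σ }. -/

import Mathlib

open Finset

/-- `p` is a probability mass function on the finite nonempty type `S`. -/
def IsPmf {S : Type*} [Fintype S] (p : S → ℝ) : Prop :=
  (∀ s, 0 ≤ p s) ∧ ∑ s, p s = 1

section klAux

variable {S : Type*} [Fintype S]

lemma pmf_exists_pos (p : S → ℝ) (hp : IsPmf p) : ∃ s, 0 < p s := by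
  by_contra h
  push_neg at h
  have : ∑ s, p s ≤ 0 := Finset.sum_nonpos (fun s _ => h s)
  rw [hp.2] at this; linarith

lemma Z_pos (p : S → ℝ) (hp : IsPmf p) (w : S → ℝ) :
    0 < ∑ s, p s * Real.exp (w s) := by
  obtain ⟨s₀, hs₀⟩ := pmf_exists_pos p hp
  apply Finset.sum_pos' (fun s _ => mul_nonneg (hp.1 s) (Real.exp_pos _).le)
  exact ⟨s₀, Finset.mem_univ _, mul_pos hs₀ (Real.exp_pos _)⟩

lemma gibbs_ineq (p : S → ℝ) (hp : IsPmf p) (q : S → ℝ) (hq : IsPmf q)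
    (habs : ∀ s, p s = 0 → q s = 0) (w : S → ℝ) :
    ∑ s ∈ univ.filter (fun s => 0 < q s), q s * (w s - Real.log (q s / p s))
      ≤ Real.log (∑ s, p s * Real.exp (w s)) := by
  set Z : ℝ := ∑ s, p s * Real.exp (w s) with hZdef
  have hZ : 0 < Z := Z_pos p hp w
  set F := univ.filter (fun s => 0 < q s) with hF
  have hqF : ∑ s ∈ F, q s = 1 := by
    rw [hF, Finset.sum_filter_of_ne, hq.2]
    intro s _ h
    exact lt_of_le_of_ne (hq.1 s) (Ne.symm h)
  have hps : ∀ s ∈ F, 0 < p s := by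
    intro s hs
    rw [hF, Finset.mem_filter] at hs
    rcases lt_or_eq_of_le (hp.1 s) with h | h
    · exact h
    · exact absurd (habs s h.symm) (ne_of_gt hs.2)
  have key : ∀ s ∈ F, q s * (w s - Real.log (q s / p s))
      ≤ p s * Real.exp (w s) / Z - q s + q s * Real.log Z := by
    intro s hs
    have hqs : 0 < q s := by rw [hF, Finset.mem_filter] at hs; exact hs.2
    have hp' : 0 < p s := hps s hs
    have ha : 0 < p s * Real.exp (w s) := mul_pos hp' (Real.exp_pos _)
    have h1 : w s - Real.log (q s / p s)
        = Real.log (p s * Real.exp (w s) / (q s * Z)) + Real.log Z := by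
      rw [Real.log_div (ne_of_gt ha) (ne_of_gt (mul_pos hqs hZ)),
        Real.log_mul (ne_of_gt hp') (Real.exp_ne_zero _),
        Real.log_mul (ne_of_gt hqs) (ne_of_gt hZ),
        Real.log_div (ne_of_gt hqs) (ne_of_gt hp'), Real.log_exp]
      ring
    have h2 : Real.log (p s * Real.exp (w s) / (q s * Z))
        ≤ p s * Real.exp (w s) / (q s * Z) - 1 :=
      Real.log_le_sub_one_of_pos (div_pos ha (mul_pos hqs hZ))
    have h3 : q s * (p s * Real.exp (w s) / (q s * Z) - 1)
        = p s * Real.exp (w s) / Z - q s := by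
      field_simp
    calc q s * (w s - Real.log (q s / p s))
        = q s * Real.log (p s * Real.exp (w s) / (q s * Z)) + q s * Real.log Z := by
          rw [h1]; ring
      _ ≤ q s * (p s * Real.exp (w s) / (q s * Z) - 1) + q s * Real.log Z := by
          have := mul_le_mul_of_nonneg_left h2 hqs.le
          linarith
      _ = p s * Real.exp (w s) / Z - q s + q s * Real.log Z := by rw [h3]
  calc ∑ s ∈ F, q s * (w s - Real.log (q s / p s))
      ≤ ∑ s ∈ F, (p s * Real.exp (w s) / Z - q s + q s * Real.log Z) :=
        Finset.sum_le_sum key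
    _ = (∑ s ∈ F, p s * Real.exp (w s)) / Z - 1 + Real.log Z := by
        rw [Finset.sum_add_distrib, Finset.sum_sub_distrib, ← Finset.sum_div,
          ← Finset.sum_mul, hqF]; ring
    _ ≤ Z / Z - 1 + Real.log Z := by
        have hle : (∑ s ∈ F, p s * Real.exp (w s)) ≤ Z := by
          rw [hZdef]
          exact Finset.sum_le_sum_of_subset_of_nonneg (Finset.subset_univ _)
            (fun s _ _ => mul_nonneg (hp.1 s) (Real.exp_pos _).le)
        have := div_le_div_of_nonneg_right hle hZ.le
        linarith
    _ = Real.log Z := by rw [div_self (ne_of_gt hZ)]; ring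

lemma weak_duality (p : S → ℝ) (hp : IsPmf p) (v : S → ℝ) (σ : ℝ)
    (q : S → ℝ) (hq : IsPmf q) (habs : ∀ s, p s = 0 → q s = 0)
    (hkl : (∑ s ∈ univ.filter (fun s => 0 < q s), q s * Real.log (q s / p s)) ≤ σ)
    (α : ℝ) (hα : 0 < α) :
    -α * Real.log (∑ s, p s * Real.exp (-(v s) / α)) - α * σ ≤ ∑ s, q s * v s := by
  have key := gibbs_ineq p hp q hq habs (fun s => -(v s) / α)
  set F := univ.filter (fun s => 0 < q s) with hF
  have hsplit : ∑ s ∈ F, q s * (-(v s) / α - Real.log (q s / p s))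
      = (-(1/α)) * (∑ s ∈ F, q s * v s) - ∑ s ∈ F, q s * Real.log (q s / p s) := by
    rw [Finset.mul_sum, ← Finset.sum_sub_distrib]
    apply Finset.sum_congr rfl
    intro s _
    field_simp
  have hqv : ∑ s ∈ F, q s * v s = ∑ s, q s * v s := by
    rw [hF]
    apply Finset.sum_filter_of_ne
    intro s _ h
    rcases lt_or_eq_of_le (hq.1 s) with h' | h'
    · exact h'
    · exact absurd (by rw [← h']; ring) h
  rw [hsplit, hqv] at key
  set KL := ∑ s ∈ F, q s * Real.log (q s / p s)
  set L := Real.log (∑ s, p s * Real.exp (-(v s) / α))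
  set V := ∑ s, q s * v s
  have h1 : (-(1/α)) * V - KL ≤ L := key
  have h2 : KL ≤ σ := hkl
  have h3 : -α * L - α * KL ≤ V := by
    have := mul_le_mul_of_nonneg_left h1 hα.le
    have hne : α ≠ 0 := ne_of_gt hα
    field_simp at this
    nlinarith
  nlinarith

noncomputable def Zf (p v : S → ℝ) (β : ℝ) : ℝ := ∑ s, p s * Real.exp (-(v s) * β)
noncomputable def Nf (p v : S → ℝ) (β : ℝ) : ℝ := ∑ s, p s * v s * Real.exp (-(v s) * β)
noncomputable def Hf (p v : S → ℝ) (β : ℝ) : ℝ :=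
  -β * (Nf p v β / Zf p v β) - Real.log (Zf p v β)
noncomputable def qt (p v : S → ℝ) (β : ℝ) (s : S) : ℝ :=
  p s * Real.exp (-(v s) * β) / Zf p v β

variable (p v : S → ℝ) (β : ℝ)

lemma Zf_pos (hp : IsPmf p) : 0 < Zf p v β := Z_pos p hp _

lemma qt_nonneg (hp : IsPmf p) (s : S) : 0 ≤ qt p v β s :=
  div_nonneg (mul_nonneg (hp.1 s) (Real.exp_pos _).le) (Zf_pos p v β hp).le

lemma qt_pos_iff (hp : IsPmf p) (s : S) : 0 < qt p v β s ↔ 0 < p s := by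
  unfold qt
  constructor
  · intro h
    rcases lt_or_eq_of_le (hp.1 s) with h' | h'
    · exact h'
    · exfalso; rw [← h'] at h; simp at h
  · intro h
    exact div_pos (mul_pos h (Real.exp_pos _)) (Zf_pos p v β hp)

lemma qt_sum (hp : IsPmf p) : ∑ s, qt p v β s = 1 := by
  unfold qt
  rw [← Finset.sum_div]
  exact div_self (ne_of_gt (Zf_pos p v β hp))

lemma qt_isPmf (hp : IsPmf p) : IsPmf (qt p v β) :=
  ⟨qt_nonneg p v β hp, qt_sum p v β hp⟩

lemma qt_abs : ∀ s, p s = 0 → qt p v β s = 0 := by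
  intro s h; unfold qt; rw [h]; simp

lemma qt_val : ∑ s, qt p v β s * v s = Nf p v β / Zf p v β := by
  unfold qt Nf
  rw [Finset.sum_div]
  apply Finset.sum_congr rfl
  intro s _
  ring

lemma qt_filter (hp : IsPmf p) :
    univ.filter (fun s => 0 < qt p v β s) = univ.filter (fun s => 0 < p s) := by
  apply Finset.filter_congr
  intro s _
  simp [qt_pos_iff p v β hp s]

lemma sum_filter_p_eq (hp : IsPmf p) (f : S → ℝ) (h0 : ∀ s, p s = 0 → f s = 0) :
    ∑ s ∈ univ.filter (fun s => 0 < p s), f s = ∑ s, f s := by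
  apply Finset.sum_filter_of_ne
  intro s _ h
  rcases lt_or_eq_of_le (hp.1 s) with h' | h'
  · exact h'
  · exact absurd (h0 s h'.symm) h

lemma qt_kl (hp : IsPmf p) : (∑ s ∈ univ.filter (fun s => 0 < qt p v β s),
      qt p v β s * Real.log (qt p v β s / p s)) = Hf p v β := by
  have hZ := Zf_pos p v β hp
  rw [qt_filter p v β hp]
  have step : ∀ s ∈ univ.filter (fun s => 0 < p s),
      qt p v β s * Real.log (qt p v β s / p s)
        = -β * (qt p v β s * v s) - Real.log (Zf p v β) * qt p v β s := by
    intro s hs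
    rw [Finset.mem_filter] at hs
    have hps : 0 < p s := hs.2
    have : qt p v β s / p s = Real.exp (-(v s) * β) / Zf p v β := by
      unfold qt; field_simp
    rw [this, Real.log_div (Real.exp_ne_zero _) (ne_of_gt hZ), Real.log_exp]
    ring
  rw [Finset.sum_congr rfl step, Finset.sum_sub_distrib, ← Finset.mul_sum, ← Finset.mul_sum]
  have h1 : ∑ s ∈ univ.filter (fun s => 0 < p s), qt p v β s * v s
      = Nf p v β / Zf p v β := by
    rw [sum_filter_p_eq p hp _ (fun s h => by rw [qt_abs p v β s h]; ring)]
    exact qt_val p v β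
  have h2 : ∑ s ∈ univ.filter (fun s => 0 < p s), qt p v β s = 1 := by
    rw [sum_filter_p_eq p hp _ (fun s h => qt_abs p v β s h)]
    exact qt_sum p v β hp
  rw [h1, h2, Hf]
  ring

lemma Zf_cont : Continuous (Zf p v) := by
  apply continuous_finset_sum
  intro s _
  exact continuous_const.mul (Real.continuous_exp.comp (continuous_const.mul continuous_id))

lemma Nf_cont : Continuous (Nf p v) := by
  apply continuous_finset_sum
  intro s _
  exact continuous_const.mul (Real.continuous_exp.comp (continuous_const.mul continuous_id))

lemma Hf_cont (hp : IsPmf p) : Continuous (Hf p v) := by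
  have hZ : ∀ β, Zf p v β ≠ 0 := fun β => ne_of_gt (Zf_pos p v β hp)
  apply Continuous.sub
  · exact (continuous_neg.comp continuous_id).mul ((Nf_cont p v).div (Zf_cont p v) hZ)
  · exact Real.continuousOn_log.comp_continuous (Zf_cont p v) (fun β => by
      simpa using hZ β)

lemma Hf_zero (hp : IsPmf p) : Hf p v 0 = 0 := by
  have h1 : Zf p v 0 = 1 := by
    unfold Zf; simp [hp.2]
  unfold Hf
  rw [h1]
  simp

lemma texp_zero {c : ℝ} (hc : c < 0) :
    Filter.Tendsto (fun β : ℝ => Real.exp (c * β)) Filter.atTop (nhds 0) :=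
  Real.tendsto_exp_atBot.comp ((Filter.tendsto_const_mul_atBot_of_neg hc).mpr Filter.tendsto_id)

lemma tmulexp_zero {c : ℝ} (hc : c < 0) :
    Filter.Tendsto (fun β : ℝ => β * Real.exp (c * β)) Filter.atTop (nhds 0) := by
  have h := (Real.tendsto_pow_mul_exp_neg_atTop_nhds_zero 1).comp
    ((Filter.tendsto_const_mul_atTop_of_pos (neg_pos.mpr hc)).mpr (Filter.tendsto_id (α := ℝ)))
  have h2 := h.const_mul (-c)⁻¹
  rw [mul_zero] at h2
  refine h2.congr (fun β => ?_)
  show (-c)⁻¹ * (((-c) * id β) ^ 1 * Real.exp (-((-c) * id β))) = β * Real.exp (c * β)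
  have hne : (-c) ≠ 0 := ne_of_gt (neg_pos.mpr hc)
  rw [show ((-c) * id β) ^ 1 * Real.exp (-((-c) * id β))
      = (-c) * (β * Real.exp (c * β)) by simp only [id, pow_one]; ring_nf,
    inv_mul_cancel_left₀ hne]

lemma Hf_tendsto (hp : IsPmf p) (m : ℝ) (hm : ∀ s, 0 < p s → m ≤ v s)
    (hW : 0 < ∑ s ∈ univ.filter (fun s => 0 < p s ∧ v s = m), p s) :
    Filter.Tendsto (Hf p v) Filter.atTop
      (nhds (-Real.log (∑ s ∈ univ.filter (fun s => 0 < p s ∧ v s = m), p s))) := by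
  classical
  set W : ℝ := ∑ s ∈ univ.filter (fun s => 0 < p s ∧ v s = m), p s with hWdef
  set G : ℝ → ℝ := fun β => ∑ s, p s * Real.exp ((m - v s) * β) with hGdef
  set G' : ℝ → ℝ := fun β => ∑ s, p s * (m - v s) * (β * Real.exp ((m - v s) * β)) with hG'def
  have hGZ : ∀ β, G β = Real.exp (m * β) * Zf p v β := by
    intro β
    rw [hGdef]; unfold Zf
    rw [Finset.mul_sum]
    apply Finset.sum_congr rfl
    intro s _
    rw [show (m - v s) * β = m * β + (-(v s) * β) by ring, Real.exp_add]
    ring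
  have hGpos : ∀ β, 0 < G β := by
    intro β
    rw [hGZ β]
    have := Zf_pos p v β hp
    positivity
  have hid : ∀ β, Hf p v β = G' β / G β - Real.log (G β) := by
    intro β
    have hZ := Zf_pos p v β hp
    have hG' : G' β = Real.exp (m * β) * β * (m * Zf p v β - Nf p v β) := by
      rw [hG'def]
      show ∑ s, p s * (m - v s) * (β * Real.exp ((m - v s) * β)) = _
      rw [mul_sub]
      unfold Zf Nf
      rw [Finset.mul_sum, Finset.mul_sum, Finset.mul_sum, ← Finset.sum_sub_distrib]
      apply Finset.sum_congr rfl
      intro s _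
      rw [show (m - v s) * β = m * β + (-(v s) * β) by ring, Real.exp_add]
      ring
    rw [hGZ β, hG']
    rw [Real.log_mul (Real.exp_ne_zero _) (ne_of_gt hZ), Real.log_exp]
    have hE : (0:ℝ) < Real.exp (m * β) := Real.exp_pos _
    unfold Hf
    field_simp
    ring
  have hGlim : Filter.Tendsto G Filter.atTop (nhds W) := by
    have hWs : W = ∑ s, (if 0 < p s ∧ v s = m then p s else 0) := by
      rw [hWdef, Finset.sum_filter]
    rw [hGdef, hWs]
    apply tendsto_finset_sum
    intro s _
    by_cases hps : 0 < p s
    · by_cases hvs : v s = m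
      · simp only [hps, hvs, and_self, if_true]
        exact (tendsto_const_nhds (α := ℝ)).congr (fun β => by simp [hvs])
      · simp only [hps, hvs, and_false, if_false]
        have hc : m - v s < 0 := by
          rcases lt_or_eq_of_le (hm s hps) with h | h
          · linarith
          · exact absurd h.symm hvs
        simpa using (texp_zero hc).const_mul (p s)
    · have hp0 : p s = 0 := le_antisymm (not_lt.mp hps) (hp.1 s)
      have hif : (if 0 < p s ∧ v s = m then p s else 0) = 0 := by simp [hp0]
      rw [hif]
      exact (tendsto_const_nhds (α := ℝ)).congr (fun β => by rw [hp0]; ring)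
  have hG'lim : Filter.Tendsto G' Filter.atTop (nhds 0) := by
    have h0 : (0:ℝ) = ∑ _s : S, (0:ℝ) := by simp
    rw [hG'def, h0]
    apply tendsto_finset_sum
    intro s _
    by_cases hps : 0 < p s
    · by_cases hvs : v s = m
      · exact (tendsto_const_nhds (α := ℝ)).congr (fun β => by simp [hvs])
      · have hc : m - v s < 0 := by
          rcases lt_or_eq_of_le (hm s hps) with h | h
          · linarith
          · exact absurd h.symm hvs
        simpa using (tmulexp_zero hc).const_mul (p s * (m - v s))
    · have hp0 : p s = 0 := le_antisymm (not_lt.mp hps) (hp.1 s)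
      exact (tendsto_const_nhds (α := ℝ)).congr (fun β => by rw [hp0]; ring)
  have hdiv : Filter.Tendsto (fun β => G' β / G β) Filter.atTop (nhds 0) := by
    have := hG'lim.div hGlim (ne_of_gt hW)
    rw [zero_div] at this
    exact this
  have hlog : Filter.Tendsto (fun β => Real.log (G β)) Filter.atTop (nhds (Real.log W)) :=
    ((Real.continuousAt_log (ne_of_gt hW)).tendsto).comp hGlim
  have := hdiv.sub hlog
  rw [zero_sub] at this
  exact this.congr (fun β => (hid β).symm)

lemma exp_le_quadratic {x : ℝ} (h : |x| ≤ 1) : Real.exp x ≤ 1 + x + x ^ 2 := by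
  have hb := Real.exp_bound h (n := 2) (by norm_num)
  have hsum : ∑ m ∈ Finset.range 2, x ^ m / m.factorial = 1 + x := by
    simp [Finset.sum_range_succ]
  rw [hsum] at hb
  have h2 : |x| ^ 2 * ((2:ℕ).succ / ((2:ℕ).factorial * 2)) = x ^ 2 * (3 / 4) := by
    rw [sq_abs]
    norm_num
  have hb' : |Real.exp x - (1 + x)| ≤ x ^ 2 * (3 / 4) := by
    calc |Real.exp x - (1 + x)| ≤ |x| ^ 2 * ((2:ℕ).succ / ((2:ℕ).factorial * 2)) := hb
      _ = x ^ 2 * (3 / 4) := h2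
  have := abs_le.mp hb'
  nlinarith [sq_nonneg x]

lemma caseA_bound (hp : IsPmf p) (ε : ℝ) (hε : 0 < ε) :
    ∃ β : ℝ, 0 < β ∧ (∑ s, p s * v s) - ε ≤ -β⁻¹ * Real.log (Zf p v β) := by
  classical
  set V : ℝ := ∑ s, |v s| with hV
  set μ : ℝ := ∑ s, p s * v s with hμ
  set ρ : ℝ := ∑ s, p s * v s ^ 2 with hρ
  have hVnn : 0 ≤ V := Finset.sum_nonneg (fun s _ => abs_nonneg _)
  have hρnn : 0 ≤ ρ := Finset.sum_nonneg (fun s _ => mul_nonneg (hp.1 s) (sq_nonneg _))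
  set β : ℝ := min (1 / (V + 1)) (ε / (ρ + 1)) with hβdef
  have hβpos : 0 < β := lt_min (by positivity) (by positivity)
  refine ⟨β, hβpos, ?_⟩
  have hxabs : ∀ s : S, |(-(v s)) * β| ≤ 1 := by
    intro s
    have h1 : |v s| ≤ V := Finset.single_le_sum (f := fun s => |v s|)
      (fun s _ => abs_nonneg _) (Finset.mem_univ s)
    have h2 : β ≤ 1 / (V + 1) := min_le_left _ _
    rw [abs_mul, abs_neg, abs_of_pos hβpos]
    calc |v s| * β ≤ V * (1 / (V + 1)) := by
          apply mul_le_mul h1 h2 hβpos.le hVnn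
      _ ≤ 1 := by
          rw [mul_one_div, div_le_one (by positivity)]
          linarith
  have hZle : Zf p v β ≤ 1 + (-(μ * β) + ρ * β ^ 2) := by
    have step1 : Zf p v β ≤ ∑ s, p s * (1 + (-(v s)) * β + ((-(v s)) * β) ^ 2) := by
      apply Finset.sum_le_sum
      intro s _
      exact mul_le_mul_of_nonneg_left (exp_le_quadratic (hxabs s)) (hp.1 s)
    have step2 : ∑ s, p s * (1 + (-(v s)) * β + ((-(v s)) * β) ^ 2)
        = 1 + (-(μ * β) + ρ * β ^ 2) := by
      have hterm : ∀ s ∈ Finset.univ, p s * (1 + (-(v s)) * β + ((-(v s)) * β) ^ 2)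
          = p s + (-β) * (p s * v s) + β ^ 2 * (p s * v s ^ 2) := by
        intro s _; ring
      rw [Finset.sum_congr rfl hterm, Finset.sum_add_distrib, Finset.sum_add_distrib,
        ← Finset.mul_sum, ← Finset.mul_sum, hp.2, ← hμ, ← hρ]
      ring
    linarith
  have hexp : 1 + (-(μ * β) + ρ * β ^ 2) ≤ Real.exp (-(μ * β) + ρ * β ^ 2) := by
    have := Real.add_one_le_exp (-(μ * β) + ρ * β ^ 2)
    linarith
  have hlog : Real.log (Zf p v β) ≤ -(μ * β) + ρ * β ^ 2 := by
    have := Real.log_le_log (Zf_pos p v β hp) (le_trans hZle hexp)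
    rwa [Real.log_exp] at this
  have hρβ : ρ * β ≤ ε := by
    have h2 : β ≤ ε / (ρ + 1) := min_le_right _ _
    calc ρ * β ≤ ρ * (ε / (ρ + 1)) := mul_le_mul_of_nonneg_left h2 hρnn
      _ ≤ ε := by
        rw [mul_div_assoc']
        rw [div_le_iff₀ (by positivity)]
        nlinarith
  have hβne : β ≠ 0 := ne_of_gt hβpos
  have hmain : -β⁻¹ * (-(μ * β) + ρ * β ^ 2) ≤ -β⁻¹ * Real.log (Zf p v β) := by
    apply mul_le_mul_of_nonpos_left hlog
    simp only [neg_nonpos]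
    positivity
  have heq : -β⁻¹ * (-(μ * β) + ρ * β ^ 2) = μ - ρ * β := by
    field_simp
    ring
  rw [heq] at hmain
  linarith

lemma caseB_bound (hp : IsPmf p) (m : ℝ)
    (hm : ∀ s, 0 < p s → m ≤ v s) (hβ : 0 ≤ β) :
    Real.log (Zf p v β) ≤ -(m * β) := by
  have hZle : Zf p v β ≤ Real.exp (-(m * β)) := by
    have step : Zf p v β ≤ ∑ s, p s * Real.exp (-(m * β)) := by
      apply Finset.sum_le_sum
      intro s _
      rcases lt_or_eq_of_le (hp.1 s) with h | h
      · apply mul_le_mul_of_nonneg_left _ (hp.1 s)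
        apply Real.exp_le_exp.mpr
        have := hm s h
        nlinarith
      · rw [← h]; simp
    rw [← Finset.sum_mul, hp.2, one_mul] at step
    exact step
  have := Real.log_le_log (Zf_pos p v β hp) hZle
  rwa [Real.log_exp] at this

end klAux

/-- Strong duality for the Kullback–Leibler uncertainty set. -/
theorem kl_strong_duality
    {S : Type*} [Fintype S] [Nonempty S]
    (p : S → ℝ) (hp : IsPmf p)
    (v : S → ℝ)
    (σ : ℝ) (hσ : 0 ≤ σ) :
    sInf {x : ℝ | ∃ q : S → ℝ, IsPmf q ∧
        (∀ s, p s = 0 → q s = 0) ∧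
        (∑ s ∈ Finset.univ.filter (fun s => 0 < q s), q s * Real.log (q s / p s)) ≤ σ ∧
        x = ∑ s, q s * v s}
      =
    sSup {x : ℝ | ∃ α : ℝ, 0 < α ∧
        x = -α * Real.log (∑ s, p s * Real.exp (-(v s) / α)) - α * σ} := by
  classical
  set P := {x : ℝ | ∃ q : S → ℝ, IsPmf q ∧
      (∀ s, p s = 0 → q s = 0) ∧
      (∑ s ∈ Finset.univ.filter (fun s => 0 < q s), q s * Real.log (q s / p s)) ≤ σ ∧
      x = ∑ s, q s * v s} with hPdef
  set D := {x : ℝ | ∃ α : ℝ, 0 < α ∧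
      x = -α * Real.log (∑ s, p s * Real.exp (-(v s) / α)) - α * σ} with hDdef
  -- p itself is primal-feasible
  have hμP : (∑ s, p s * v s) ∈ P := by
    refine ⟨p, hp, fun s h => h, ?_, rfl⟩
    have hzero : ∀ s ∈ Finset.univ.filter (fun s => 0 < p s),
        p s * Real.log (p s / p s) = 0 := by
      intro s hs
      rw [Finset.mem_filter] at hs
      rw [div_self (ne_of_gt hs.2), Real.log_one, mul_zero]
    rw [Finset.sum_congr rfl hzero]
    simpa using hσ
  have hPne : P.Nonempty := ⟨_, hμP⟩
  -- weak duality
  have hwd : ∀ d ∈ D, ∀ x ∈ P, d ≤ x := by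
    rintro d ⟨α, hα, rfl⟩ x ⟨q, hq, habs, hkl, rfl⟩
    exact weak_duality p hp v σ q hq habs hkl α hα
  have hDne : D.Nonempty := ⟨_, ⟨1, one_pos, rfl⟩⟩
  have hDbdd : BddAbove D := ⟨∑ s, p s * v s, fun d hd => hwd d hd _ hμP⟩
  obtain ⟨d₀, hd₀⟩ := hDne
  have hPbdd : BddBelow P := ⟨d₀, fun x hx => hwd d₀ hd₀ x hx⟩
  have hle : sSup D ≤ sInf P :=
    csSup_le ⟨d₀, hd₀⟩ (fun d hd => le_csInf hPne (fun x hx => hwd d hd x hx))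
  -- conversion between α-form and β-form
  have hconv : ∀ β : ℝ, (∑ s, p s * Real.exp (-(v s) / β⁻¹)) = Zf p v β := by
    intro β
    unfold Zf
    apply Finset.sum_congr rfl
    intro s _
    rw [div_eq_mul_inv, inv_inv]
  have hDmem : ∀ β : ℝ, 0 < β →
      (-β⁻¹ * Real.log (Zf p v β) - β⁻¹ * σ) ∈ D := by
    intro β hβ
    exact ⟨β⁻¹, inv_pos.mpr hβ, by rw [hconv β]⟩
  -- min of v over support
  obtain ⟨spos, hspos⟩ := pmf_exists_pos p hp
  have hTne : (Finset.univ.filter (fun s => 0 < p s)).Nonempty :=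
    ⟨spos, Finset.mem_filter.mpr ⟨Finset.mem_univ _, hspos⟩⟩
  obtain ⟨s₀, hs₀T, hs₀min⟩ := Finset.exists_min_image _ v hTne
  rw [Finset.mem_filter] at hs₀T
  set m := v s₀ with hmdef
  have hm : ∀ s, 0 < p s → m ≤ v s := by
    intro s hs
    exact hs₀min s (Finset.mem_filter.mpr ⟨Finset.mem_univ _, hs⟩)
  set W : ℝ := ∑ s ∈ Finset.univ.filter (fun s => 0 < p s ∧ v s = m), p s with hWdef
  have hW : 0 < W := by
    apply Finset.sum_pos'
    · intro s hs; exact hp.1 s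
    · exact ⟨s₀, Finset.mem_filter.mpr ⟨Finset.mem_univ _, hs₀T.2, rfl⟩, hs₀T.2⟩
  have hge : sInf P ≤ sSup D := by
    by_cases hK : -Real.log W ≤ σ
    · -- case B : sInf P ≤ m ≤ sSup D
      have hmP : m ∈ P := by
        set q' : S → ℝ := fun s => if 0 < p s ∧ v s = m then p s / W else 0 with hq'def
        have hq'nonneg : ∀ s, 0 ≤ q' s := by
          intro s
          simp only [hq'def]
          by_cases h : 0 < p s ∧ v s = m
          · rw [if_pos h]; exact div_nonneg h.1.le hW.le
          · rw [if_neg h]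
        have hq'sum : ∑ s, q' s = 1 := by
          simp only [hq'def]
          rw [← Finset.sum_filter, ← Finset.sum_div, ← hWdef, div_self (ne_of_gt hW)]
        have hq'abs : ∀ s, p s = 0 → q' s = 0 := by
          intro s h
          simp only [hq'def]
          rw [if_neg]
          rintro ⟨h1, -⟩
          rw [h] at h1
          exact lt_irrefl 0 h1
        have hfilter : Finset.univ.filter (fun s => 0 < q' s)
            = Finset.univ.filter (fun s => 0 < p s ∧ v s = m) := by
          apply Finset.filter_congr
          intro s _
          simp only [hq'def]
          by_cases h : 0 < p s ∧ v s = m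
          · rw [if_pos h]
            exact iff_of_true (div_pos h.1 hW) h
          · rw [if_neg h]
            exact iff_of_false (lt_irrefl 0) h
        have hkl' : (∑ s ∈ Finset.univ.filter (fun s => 0 < q' s),
            q' s * Real.log (q' s / p s)) ≤ σ := by
          rw [hfilter]
          have hterm : ∀ s ∈ Finset.univ.filter (fun s => 0 < p s ∧ v s = m),
              q' s * Real.log (q' s / p s) = (p s / W) * (-Real.log W) := by
            intro s hs
            rw [Finset.mem_filter] at hs
            have hps := hs.2.1
            simp only [hq'def]
            rw [if_pos hs.2]
            have hps' : p s ≠ 0 := ne_of_gt hps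
            have hdiv : p s / W / p s = W⁻¹ := by field_simp
            rw [hdiv, Real.log_inv]
          rw [Finset.sum_congr rfl hterm, ← Finset.sum_mul, ← Finset.sum_div, ← hWdef,
            div_self (ne_of_gt hW), one_mul]
          exact hK
        refine ⟨q', ⟨hq'nonneg, hq'sum⟩, hq'abs, hkl', ?_⟩
        have hterm : ∀ s ∈ (Finset.univ : Finset S),
            q' s * v s = (if 0 < p s ∧ v s = m then p s / W * m else 0) := by
          intro s _
          simp only [hq'def]
          by_cases h : 0 < p s ∧ v s = m
          · rw [if_pos h, if_pos h, h.2]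
          · rw [if_neg h, if_neg h, zero_mul]
        rw [Finset.sum_congr rfl hterm, ← Finset.sum_filter]
        have : ∑ s ∈ Finset.univ.filter (fun s => 0 < p s ∧ v s = m), p s / W * m
            = (∑ s ∈ Finset.univ.filter (fun s => 0 < p s ∧ v s = m), p s) / W * m := by
          rw [Finset.sum_div, Finset.sum_mul]
        rw [this, ← hWdef, div_self (ne_of_gt hW), one_mul]
      have h1 : sInf P ≤ m := csInf_le hPbdd hmP
      have h2 : m ≤ sSup D := by
        apply le_of_forall_lt
        intro c hc
        set ε : ℝ := m - c with hεdef
        have hε : 0 < ε := by rw [hεdef]; linarith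
        set β : ℝ := σ / ε + 1 with hβdef
        have hβpos : 0 < β := by
          rw [hβdef]
          positivity
        have hlogZ := caseB_bound p v β hp m hm hβpos.le
        have hd := hDmem β hβpos
        have hval : m - β⁻¹ * σ ≤ -β⁻¹ * Real.log (Zf p v β) - β⁻¹ * σ := by
          have : -β⁻¹ * (-(m * β)) ≤ -β⁻¹ * Real.log (Zf p v β) := by
            apply mul_le_mul_of_nonpos_left hlogZ
            simp only [neg_nonpos]
            positivity
          have heq : -β⁻¹ * (-(m * β)) = m := by
            field_simp
          rw [heq] at this
          linarith
        have hσβ : β⁻¹ * σ < ε := by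
          rw [inv_mul_eq_div, div_lt_iff₀ hβpos, hβdef]
          have : σ / ε * ε = σ := by field_simp
          nlinarith
        have : c < -β⁻¹ * Real.log (Zf p v β) - β⁻¹ * σ := by
          rw [hεdef] at hσβ
          linarith
        exact lt_of_lt_of_le this (le_csSup hDbdd hd)
      linarith
    · push_neg at hK
      by_cases hσ0 : σ = 0
      · -- case A : sInf P ≤ μ ≤ sSup D
        have h1 : sInf P ≤ ∑ s, p s * v s := csInf_le hPbdd hμP
        have h2 : (∑ s, p s * v s) ≤ sSup D := by
          apply le_of_forall_lt
          intro c hc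
          set ε : ℝ := (∑ s, p s * v s) - c with hεdef
          have hε : 0 < ε := by rw [hεdef]; linarith
          obtain ⟨β, hβpos, hβ⟩ := caseA_bound p v hp (ε / 2) (by positivity)
          have hd := hDmem β hβpos
          rw [hσ0] at hd
          simp only [mul_zero, sub_zero] at hd
          have : c < -β⁻¹ * Real.log (Zf p v β) := by
            rw [hεdef] at hβ
            linarith
          exact lt_of_lt_of_le this (le_csSup hDbdd hd)
        linarith
      · -- case C : exact optimizer via IVT
        have hσpos : 0 < σ := lt_of_le_of_ne hσ (Ne.symm hσ0)
        have htend := Hf_tendsto p v hp m hm hW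
        have hev : ∀ᶠ β in Filter.atTop, σ < Hf p v β :=
          htend.eventually (eventually_gt_nhds hK)
        obtain ⟨β₁, hσβ₁, hβ₁0⟩ := (hev.and (Filter.eventually_ge_atTop 0)).exists
        have hivt := intermediate_value_Icc hβ₁0 ((Hf_cont p v hp).continuousOn)
        have hσmem : σ ∈ Set.Icc (Hf p v 0) (Hf p v β₁) := by
          rw [Hf_zero p v hp]
          exact ⟨hσ, hσβ₁.le⟩
        obtain ⟨β, hβmem, hHβ⟩ := hivt hσmem
        have hβpos : 0 < β := by
          rcases lt_or_eq_of_le hβmem.1 with h | h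
          · exact h
          · exfalso
            rw [← h, Hf_zero p v hp] at hHβ
            exact hσ0 hHβ.symm
        have hβne : β ≠ 0 := ne_of_gt hβpos
        have hZ := Zf_pos p v β hp
        -- primal membership
        have hxP : (∑ s, qt p v β s * v s) ∈ P := by
          refine ⟨qt p v β, qt_isPmf p v β hp, qt_abs p v β, ?_, rfl⟩
          rw [qt_kl p v β hp, hHβ]
        -- this value equals the dual element at β⁻¹
        have heq : (∑ s, qt p v β s * v s)
            = -β⁻¹ * Real.log (Zf p v β) - β⁻¹ * σ := by
          rw [qt_val p v β]
          have hHβ' : -β * (Nf p v β / Zf p v β) - Real.log (Zf p v β) = σ := hHβ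
          apply mul_left_cancel₀ hβne
          have hR : β * (-β⁻¹ * Real.log (Zf p v β) - β⁻¹ * σ)
              = -Real.log (Zf p v β) - σ := by
            field_simp
          rw [hR]
          rw [neg_mul] at hHβ'
          linarith
        have hd := hDmem β hβpos
        rw [← heq] at hd
        exact le_trans (csInf_le hPbdd hxP) (le_csSup hDbdd hd)
  exact le_antisymm hge hle
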